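/- Let X be a set and δ : Set X → Set X an operator satisfying the Magari laws: δ(∅) = ∅, δ(A ∪ B) = δ(A) ∪ δ(B), and δ(A) = δ(A \ δ(A)) for all A, B ⊆ X. Then there exists a unique topology τ on X such that δ coincides with the derived-set operator of τ (i.e., δ(A) = d_τ(A) for all A ⊆ X); moreover, this topology τ is scattered. -/

import Mathlib

/-- Scatteredness of an explicitly given topology `t` on `X`: every nonempty
subset has a point isolated in it. -/
def IsScatteredTop {X : Type*} (t : TopologicalSpace X) : Prop :=
  ∀ A : Set X, A.Nonempty → ∃ x ∈ A, ∃ U : Set X, @IsOpen X t U ∧ U ∩ A = {x}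

/-- Derived set membership via closure. -/
lemma mem_derivedSet_iff_closure {X : Type*} [TopologicalSpace X] {A : Set X} {x : X} :
    x ∈ derivedSet A ↔ x ∈ closure (A \ {x}) := by
  rw [mem_derivedSet, accPt_principal_iff_clusterPt, ← mem_closure_iff_clusterPt]


lemma closure_eq_union_derivedSet' {X : Type*} [TopologicalSpace X] (A : Set X) :
    closure A = A ∪ derivedSet A := by
  apply subset_antisymm
  · intro x hx
    by_cases hxa : x ∈ A
    · exact Or.inl hxa
    · right
      rw [mem_derivedSet_iff_closure]
      have : A \ {x} = A := by
        ext y; simp only [Set.mem_diff, Set.mem_singleton_iff, and_iff_left_iff_imp]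
        rintro hy rfl; exact hxa hy
      rw [this]; exact hx
  · exact Set.union_subset subset_closure (derivedSet_subset_closure A)

/-- If `δ : Set X → Set X` satisfies the Magari laws, then there
is a unique topology `t` on `X` whose derived-set operator coincides with `δ`;
moreover, any such topology is scattered. -/
theorem magari_unique_scattered_topology {X : Type*} (δ : Set X → Set X)
    (h1 : δ ∅ = ∅)
    (h2 : ∀ A B : Set X, δ (A ∪ B) = δ A ∪ δ B)
    (h3 : ∀ A : Set X, δ A = δ (A \ δ A)) :
    (∃! t : TopologicalSpace X, ∀ A : Set X, δ A = @derivedSet X t A) ∧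
      (∀ t : TopologicalSpace X, (∀ A : Set X, δ A = @derivedSet X t A) →
        IsScatteredTop t) := by
  -- monotonicity
  have mono : ∀ {A B : Set X}, A ⊆ B → δ A ⊆ δ B := by
    intro A B hAB
    have : δ B = δ A ∪ δ B := by
      rw [← h2, Set.union_eq_self_of_subset_left hAB]
    rw [this]; exact Set.subset_union_left
  -- the "4" axiom: δ (δ A) ⊆ δ A
  have four : ∀ A : Set X, δ (δ A) ⊆ δ A := by
    intro A
    have hB : δ (A ∪ δ A) ⊆ δ A := by
      rw [h3 (A ∪ δ A)]
      apply mono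
      intro x hx
      rcases hx with ⟨hx1, hx2⟩
      rcases hx1 with hx1 | hx1
      · exact hx1
      · exact absurd (by rw [h2]; exact Or.inl hx1) hx2
    intro x hx
    exact hB (by rw [h2]; exact Or.inr hx)
  -- a point is never in δ of its own singleton
  have not_self : ∀ x : X, x ∉ δ {x} := by
    intro x hx
    have : ({x} : Set X) \ δ {x} = ∅ := by
      ext y; simp only [Set.mem_diff, Set.mem_singleton_iff, Set.mem_empty_iff_false,
        iff_false, not_and, not_not]
      rintro rfl; exact hx
    rw [h3 {x}, this, h1] at hx
    exact hx
  -- δ of a singleton-removed set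
  have key : ∀ (A : Set X) (x : X), x ∈ δ A ↔ x ∈ δ (A \ {x}) := by
    intro A x
    constructor
    · intro hx
      have : A = (A \ {x}) ∪ (A ∩ {x}) := by
        ext y; by_cases hy : y = x <;> simp [hy]
      rw [this, h2] at hx
      rcases hx with hx | hx
      · exact hx
      · exact absurd (mono Set.inter_subset_right hx) (not_self x)
    · intro hx; exact mono Set.diff_subset hx
  -- define the topology
  let t : TopologicalSpace X :=
    { IsOpen := fun U => δ Uᶜ ⊆ Uᶜ
      isOpen_univ := by simp [h1]
      isOpen_inter := by
        intro U V hU hV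
        rw [Set.compl_inter, h2]
        exact Set.union_subset (hU.trans Set.subset_union_left)
          (hV.trans Set.subset_union_right)
      isOpen_sUnion := by
        intro S hS
        rw [Set.compl_sUnion]
        intro x hx
        rw [Set.mem_sInter]
        rintro C ⟨U, hU, rfl⟩
        exact hS U hU (mono (Set.sInter_subset_of_mem (Set.mem_image_of_mem _ hU)) hx) }
  have hclosed : ∀ C : Set X, @IsClosed X t C ↔ δ C ⊆ C := by
    intro C
    constructor
    · intro h
      have h' : δ Cᶜᶜ ⊆ Cᶜᶜ := h.isOpen_compl
      simpa using h'
    · intro h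
      constructor
      show δ Cᶜᶜ ⊆ Cᶜᶜ
      simpa using h
  -- closure in t
  have hclosure : ∀ A : Set X, @closure X t A = A ∪ δ A := by
    intro A
    apply subset_antisymm
    · apply closure_minimal Set.subset_union_left
      rw [hclosed]
      rw [h2]
      exact Set.union_subset (Set.subset_union_right)
        (fun x hx => Or.inr (four A hx))
    · apply Set.union_subset (subset_closure)
      have : A ⊆ @closure X t A := subset_closure
      calc δ A ⊆ δ (@closure X t A) := mono this
        _ ⊆ @closure X t A := (hclosed _).1 (@isClosed_closure X t A)
  -- derivedSet of t is δ
  have hder : ∀ A : Set X, δ A = @derivedSet X t A := by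
    intro A
    ext x
    rw [@mem_derivedSet_iff_closure X t, hclosure]
    constructor
    · intro hx
      exact Or.inr ((key A x).1 hx)
    · rintro (hx | hx)
      · exact absurd hx.2 (by simp)
      · exact (key A x).2 hx
  constructor
  · refine ⟨t, hder, ?_⟩
    intro s hs
    apply TopologicalSpace.ext_isClosed
    intro C
    rw [← @closure_eq_iff_isClosed X s C, ← @closure_eq_iff_isClosed X t C,
      @closure_eq_union_derivedSet' X s C, @closure_eq_union_derivedSet' X t C,
      ← hs, ← hder]
  · intro s hs A hA
    -- scattered
    have hne : (A \ δ A).Nonempty := by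
      by_contra h
      rw [Set.not_nonempty_iff_eq_empty] at h
      have : δ A = ∅ := by rw [h3 A, h, h1]
      rw [this, Set.diff_empty] at h
      exact absurd (h ▸ hA) (by simp)
    obtain ⟨x, hxA, hxd⟩ := hne
    refine ⟨x, hxA, (@closure X s (A \ {x}))ᶜ, ?_, ?_⟩
    · exact (@isClosed_closure X s (A \ {x})).isOpen_compl
    · ext y
      simp only [Set.mem_inter_iff, Set.mem_compl_iff, Set.mem_singleton_iff]
      constructor
      · rintro ⟨hy1, hy2⟩
        by_contra hyx
        exact hy1 (@subset_closure X s (A \ {x}) y ⟨hy2, hyx⟩)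
      · rintro rfl
        refine ⟨?_, hxA⟩
        intro hc
        exact hxd (by rw [hs, @mem_derivedSet_iff_closure X s]; exact hc)
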